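/- Let s ≥ 1 be an integer. Then: (1) for every n ≥ 1, n^s divides D_n^s, so that the polylogarithm Li_s(z) = Σ_{n≥1} z^n/n^s belongs to the filtration level 𝒢_s; but (2) there do NOT exist positive integers b and C such that n^s divides D_{bn}^{s−1} · C^{n+1} for every n ≥ 1; consequently Li_s does not belong to 𝒢_{s−1}. -/

import Mathlib

/-- `D n = lcm {1, 2, …, n}`, with `D 0 = 1`. -/
def D (n : ℕ) : ℕ := (Finset.Icc 1 n).lcm id

/-- The coefficient sequence of the polylogarithm `Li_s(z) = Σ_{n≥1} zⁿ/nˢ`. -/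
noncomputable def liCoeff (s : ℕ) (n : ℕ) : ℚ := if n = 0 then 0 else 1 / (n : ℚ) ^ s

lemma lcm_ne_zero_aux (S : Finset ℕ) (h : 0 ∉ S) : S.lcm id ≠ 0 := by
  induction S using Finset.induction_on with
  | empty => simp
  | @insert a S _ ih =>
    simp only [Finset.lcm_insert, id]
    have h1 : a ≠ 0 := fun h0 => h (h0 ▸ Finset.mem_insert_self a S)
    have h2 : S.lcm id ≠ 0 := ih (fun h0 => h (Finset.mem_insert_of_mem h0))
    exact Nat.lcm_ne_zero h1 h2

lemma D_ne_zero (n : ℕ) : D n ≠ 0 := by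
  apply lcm_ne_zero_aux
  simp [Finset.mem_Icc]

lemma dvd_D {n k : ℕ} (h1 : 1 ≤ k) (h2 : k ≤ n) : k ∣ D n :=
  Finset.dvd_lcm (Finset.mem_Icc.mpr ⟨h1, h2⟩)

lemma pow_not_dvd_lcm {p j : ℕ} (hp : p.Prime) (hj : 1 ≤ j) (S : Finset ℕ)
    (h0 : 0 ∉ S) (h : ∀ k ∈ S, ¬ p ^ j ∣ k) : ¬ p ^ j ∣ S.lcm id := by
  induction S using Finset.induction_on with
  | empty =>
    simp only [Finset.lcm_empty, Nat.dvd_one]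
    intro hd
    have := Nat.one_lt_pow (Nat.one_le_iff_ne_zero.mp hj) hp.one_lt
    omega
  | @insert a S _ ih =>
    simp only [Finset.lcm_insert, id]
    have h1 : a ≠ 0 := fun h0' => h0 (h0' ▸ Finset.mem_insert_self a S)
    have h2 : S.lcm id ≠ 0 := lcm_ne_zero_aux S (fun h0' => h0 (Finset.mem_insert_of_mem h0'))
    intro hd
    have hfac := Nat.factorization_lcm h1 h2
    have hle : j ≤ (Nat.lcm a (S.lcm id)).factorization p :=
      (Nat.Prime.pow_dvd_iff_le_factorization hp (Nat.lcm_ne_zero h1 h2)).mp hd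
    rw [hfac] at hle
    simp only [Finsupp.sup_apply, le_sup_iff, le_max_iff] at hle
    rcases hle with hle | hle
    · exact h a (Finset.mem_insert_self a S)
        ((Nat.Prime.pow_dvd_iff_le_factorization hp h1).mpr hle)
    · exact ih (fun h0' => h0 (Finset.mem_insert_of_mem h0'))
        (fun k hk => h k (Finset.mem_insert_of_mem hk))
        ((Nat.Prime.pow_dvd_iff_le_factorization hp h2).mpr hle)

theorem polylog_filtration (s : ℕ) (hs : 1 ≤ s) :
    (∀ n : ℕ, 1 ≤ n → n ^ s ∣ D n ^ s) ∧
    (∃ b C : ℕ, 0 < b ∧ 0 < C ∧ ∀ n : ℕ, ∃ m : ℤ,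
        (D (b * n) : ℚ) ^ s * (C : ℚ) ^ (n + 1) * liCoeff s n = (m : ℚ)) ∧
    (¬ ∃ b C : ℕ, 0 < b ∧ 0 < C ∧ ∀ n : ℕ, 1 ≤ n →
        n ^ s ∣ D (b * n) ^ (s - 1) * C ^ (n + 1)) ∧
    (¬ ∃ b C : ℕ, 0 < b ∧ 0 < C ∧ ∀ n : ℕ, ∃ m : ℤ,
        (D (b * n) : ℚ) ^ (s - 1) * (C : ℚ) ^ (n + 1) * liCoeff s n = (m : ℚ)) := by
  have part1 : ∀ n : ℕ, 1 ≤ n → n ^ s ∣ D n ^ s := fun n hn =>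
    pow_dvd_pow_of_dvd (dvd_D hn le_rfl) s
  have part3 : ¬ ∃ b C : ℕ, 0 < b ∧ 0 < C ∧ ∀ n : ℕ, 1 ≤ n →
      n ^ s ∣ D (b * n) ^ (s - 1) * C ^ (n + 1) := by
    rintro ⟨b, C, hb, hC, H⟩
    obtain ⟨p, hple, hp⟩ := Nat.exists_infinite_primes (max b C + 1)
    have hpb : b < p := by omega
    have hpC : C < p := by omega
    have hp1 : 1 ≤ p := hp.one_lt.le
    have h := H p hp1
    -- p does not divide C
    have hpdC : ¬ p ∣ C := fun hd => absurd (Nat.le_of_dvd hC hd) (by omega)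
    have hcop : (p ^ s).Coprime (C ^ (p + 1)) :=
      Nat.Coprime.pow _ _ ((Nat.Prime.coprime_iff_not_dvd hp).mpr hpdC)
    have h2 : p ^ s ∣ D (b * p) ^ (s - 1) := hcop.dvd_of_dvd_mul_right h
    -- p^2 does not divide D (b*p)
    have hnd : ¬ p ^ 2 ∣ D (b * p) := by
      apply pow_not_dvd_lcm hp (by norm_num)
      · simp [Finset.mem_Icc]
      · intro k hk hdk
        rw [Finset.mem_Icc] at hk
        have h1 : p ^ 2 ≤ k := Nat.le_of_dvd (by omega) hdk
        have h2 : b * p < p ^ 2 := by nlinarith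
        omega
    have hD0 : D (b * p) ≠ 0 := D_ne_zero _
    have hfac1 : (D (b * p)).factorization p ≤ 1 := by
      by_contra hgt
      exact hnd ((Nat.Prime.pow_dvd_iff_le_factorization hp hD0).mpr (by omega))
    have hle : s ≤ (D (b * p) ^ (s - 1)).factorization p :=
      (Nat.Prime.pow_dvd_iff_le_factorization hp (pow_ne_zero _ hD0)).mp h2
    rw [Nat.factorization_pow] at hle
    simp only [Finsupp.smul_apply, smul_eq_mul] at hle
    have : s ≤ (s - 1) * 1 := hle.trans (Nat.mul_le_mul_left _ hfac1)
    omega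
  refine ⟨part1, ⟨1, 1, one_pos, one_pos, fun n => ?_⟩, part3, ?_⟩
  · rcases Nat.eq_zero_or_pos n with h0 | h0
    · exact ⟨0, by simp [h0, liCoeff]⟩
    · obtain ⟨k, hk⟩ := part1 n h0
      refine ⟨k, ?_⟩
      have hn : (n : ℚ) ^ s ≠ 0 := pow_ne_zero _ (Nat.cast_ne_zero.mpr (by omega))
      have : ((D (1 * n) : ℕ) : ℚ) ^ s = (n : ℚ) ^ s * (k : ℚ) := by
        rw [one_mul]
        exact_mod_cast congrArg (fun x : ℕ => (x : ℚ)) hk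
      simp only [liCoeff, if_neg (by omega : n ≠ 0)]
      rw [Nat.cast_one, one_pow, mul_one, this]
      field_simp
      simp
  · rintro ⟨b, C, hb, hC, H⟩
    apply part3
    refine ⟨b, C, hb, hC, fun n hn => ?_⟩
    obtain ⟨m, hm⟩ := H n
    simp only [liCoeff, if_neg (by omega : n ≠ 0)] at hm
    have hn0 : (n : ℚ) ^ s ≠ 0 := pow_ne_zero _ (Nat.cast_ne_zero.mpr (by omega))
    have heq : ((D (b * n) ^ (s - 1) * C ^ (n + 1) : ℕ) : ℚ) = (m : ℚ) * ((n ^ s : ℕ) : ℚ) := by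
      push_cast
      rw [← hm]
      field_simp
    have hm0 : 0 ≤ m := by
      by_contra hneg
      push_neg at hneg
      have h1 : (0 : ℚ) ≤ ((D (b * n) ^ (s - 1) * C ^ (n + 1) : ℕ) : ℚ) := Nat.cast_nonneg _
      have h2 : ((m : ℚ)) * ((n ^ s : ℕ) : ℚ) < 0 := by
        apply mul_neg_of_neg_of_pos
        · exact_mod_cast Int.cast_lt_zero.mpr hneg
        · positivity
      linarith [heq ▸ h1]
    obtain ⟨m', rfl⟩ := Int.eq_ofNat_of_zero_le hm0
    refine ⟨m', ?_⟩
    have : (D (b * n) ^ (s - 1) * C ^ (n + 1) : ℕ) = m' * n ^ s := by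
      exact_mod_cast heq
    rw [this]
    ring
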